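/- Let W_m = {x ∈ ℝ^m : x_j* ≤ 1/√j for j = 1,...,m} be the unit ball of weak ℓ₂, where (x_j*) is the nonincreasing rearrangement of (|x_j|). Then E sup_{w ∈ W_m} ∑_{i=1}^m g_i w_i = E ∑_{i=1}^m g_i*/√i ≤ C√m for an absolute constant C, where (g_i) are i.i.d. standard Gaussians. -/

import Mathlib

open MeasureTheory ProbabilityTheory
open scoped NNReal ENNReal

/-- The unit ball `W_m` of weak `ℓ₂`: vectors whose nonincreasing rearrangement satisfies
`x_j* ≤ 1/√j`, characterized by `#{i : |x_i| > 1/√j} < j` for every `j ≥ 1`. -/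
def weakL2Ball (m : ℕ) : Set (Fin m → ℝ) :=
  {x | ∀ j : ℕ, 1 ≤ j →
    (Finset.univ.filter fun i => 1 / Real.sqrt j < |x i|).card < j}

namespace Stmt15Aux


lemma zero_mem (m : ℕ) : (0 : Fin m → ℝ) ∈ weakL2Ball m := by
  intro j hj
  have : (Finset.univ.filter fun i : Fin m => 1 / Real.sqrt j < |(0 : Fin m → ℝ) i|) = ∅ := by
    refine Finset.filter_false_of_mem fun i _ => ?_
    simp only [Pi.zero_apply, abs_zero, not_lt]
    positivity
  rw [this]
  simpa using (by omega : 0 < j)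

lemma one_div_sqrt_lt {j k : ℕ} (hj : 1 ≤ j) :
    1 / Real.sqrt j < 1 / Real.sqrt (k + 1) ↔ k + 1 < j := by
  have h1 : (0:ℝ) < Real.sqrt j := Real.sqrt_pos.2 (by exact_mod_cast hj)
  have h2 : (0:ℝ) < Real.sqrt ((k:ℝ) + 1) := Real.sqrt_pos.2 (by positivity)
  rw [div_lt_div_iff₀ h1 h2, one_mul, one_mul, Real.sqrt_lt_sqrt_iff (by positivity)]
  constructor
  · intro h
    exact_mod_cast h
  · intro h
    exact_mod_cast h

/-- Lower bound witness: for each `σ` there is `w ∈ W` with `∑ a i * w i = ∑ |a (σ i)|/√(i+1)`. -/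
lemma exists_witness {m : ℕ} (a : Fin m → ℝ) (σ : Equiv.Perm (Fin m)) :
    ∃ w ∈ weakL2Ball m,
      ∑ i, a i * w i = ∑ i : Fin m, |a (σ i)| / Real.sqrt ((i : ℕ) + 1) := by
  set s : Fin m → ℝ := fun i => if 0 ≤ a i then 1 else -1 with hs
  refine ⟨fun i => s i / Real.sqrt ((σ.symm i : ℕ) + 1), ?_, ?_⟩
  · intro j hj
    have habs : ∀ i : Fin m, |s i / Real.sqrt ((σ.symm i : ℕ) + 1)|
        = 1 / Real.sqrt ((σ.symm i : ℕ) + 1) := by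
      intro i
      rw [abs_div]
      congr 1
      · rw [hs]; dsimp only; split <;> simp
      · rw [abs_of_nonneg (Real.sqrt_nonneg _)]
    calc (Finset.univ.filter fun i =>
          1 / Real.sqrt j < |s i / Real.sqrt ((σ.symm i : ℕ) + 1)|).card
        = (Finset.univ.filter fun i : Fin m => ((σ.symm i : ℕ) + 1) < j).card := by
          congr 1
          apply Finset.filter_congr
          intro i _
          rw [habs i]
          simpa [one_div] using one_div_sqrt_lt (k := ((σ.symm i : Fin m) : ℕ)) hj
      _ = (Finset.univ.filter fun k : Fin m => ((k : ℕ) + 1) < j).card := by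
          refine Finset.card_bij (fun i _ => σ.symm i) ?_ ?_ ?_
          · intro i hi
            simp only [Finset.mem_filter, Finset.mem_univ, true_and] at hi ⊢
            exact hi
          · intro i hi i' hi' h
            exact σ.symm.injective h
          · intro k hk
            refine ⟨σ k, ?_, by simp⟩
            simp only [Finset.mem_filter, Finset.mem_univ, true_and] at hk ⊢
            simpa using hk
      _ ≤ (Finset.range (j - 1)).card := by
          refine Finset.card_le_card_of_injOn (fun k => (k : ℕ)) ?_ ?_
          · intro k hk
            simp only [Finset.mem_coe, Finset.mem_filter, Finset.mem_univ, true_and] at hk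
            simp only [Finset.mem_coe, Finset.mem_range]
            omega
          · intro k _ k' _ h
            exact Fin.ext h
      _ < j := by
          rw [Finset.card_range]; omega
  · rw [← Equiv.sum_comp σ (fun i => a i * (s i / Real.sqrt ((σ.symm i : ℕ) + 1)))]
    refine Finset.sum_congr rfl fun k _ => ?_
    rw [Equiv.symm_apply_apply]
    rw [hs]
    dsimp only
    split
    · rename_i h
      rw [abs_of_nonneg h]; ring
    · rename_i h
      rw [abs_of_neg (lt_of_not_ge h)]; ring

/-- Sorted smallness: if `w ∈ W` and `σ` sorts `|w|` nonincreasingly then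
`|w (σ k)| ≤ 1/√(k+1)`. -/
lemma sorted_le {m : ℕ} {w : Fin m → ℝ} (hw : w ∈ weakL2Ball m)
    {σ : Equiv.Perm (Fin m)} (hσ : Antitone fun k => |w (σ k)|) (k : Fin m) :
    |w (σ k)| ≤ 1 / Real.sqrt ((k : ℕ) + 1) := by
  by_contra h
  push_neg at h
  have hsub : (Finset.Iic k).image σ ⊆
      Finset.univ.filter fun i => 1 / Real.sqrt ((k : ℕ) + 1) < |w i| := by
    intro i hi
    simp only [Finset.mem_image, Finset.mem_Iic] at hi
    obtain ⟨l, hl, rfl⟩ := hi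
    simp only [Finset.mem_filter, Finset.mem_univ, true_and]
    exact lt_of_lt_of_le h (hσ hl)
  have hcard : (k : ℕ) + 1 ≤
      (Finset.univ.filter fun i => 1 / Real.sqrt ((k : ℕ) + 1) < |w i|).card := by
    calc (k : ℕ) + 1 = (Finset.Iic k).card := (Fin.card_Iic k).symm
      _ = ((Finset.Iic k).image σ).card :=
          (Finset.card_image_of_injective _ σ.injective).symm
      _ ≤ _ := Finset.card_le_card hsub
  have := hw ((k : ℕ) + 1) (by omega)
  have hcast : ((((k:ℕ) + 1 : ℕ)) : ℝ) = (k : ℕ) + 1 := by push_cast; ring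
  rw [hcast] at this
  omega



noncomputable def T {m : ℕ} (a : Fin m → ℝ) : ℝ :=
  ⨆ σ : Equiv.Perm (Fin m), ∑ i : Fin m, |a (σ i)| / Real.sqrt ((i : ℕ) + 1)

lemma bddT {m : ℕ} (a : Fin m → ℝ) :
    BddAbove (Set.range fun σ : Equiv.Perm (Fin m) =>
      ∑ i : Fin m, |a (σ i)| / Real.sqrt ((i : ℕ) + 1)) :=
  (Set.finite_range _).bddAbove

lemma le_T {m : ℕ} (a : Fin m → ℝ) (σ : Equiv.Perm (Fin m)) :
    ∑ i : Fin m, |a (σ i)| / Real.sqrt ((i : ℕ) + 1) ≤ T a :=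
  le_ciSup (bddT a) σ

lemma T_nonneg {m : ℕ} (a : Fin m → ℝ) : 0 ≤ T a := by
  refine le_trans ?_ (le_T a 1)
  refine Finset.sum_nonneg fun i _ => ?_
  positivity

/-- Upper bound: `∑ a i * w i ≤ T a` for any `w ∈ W`. -/
lemma sum_le_T {m : ℕ} (a : Fin m → ℝ) {w : Fin m → ℝ} (hw : w ∈ weakL2Ball m) :
    ∑ i, a i * w i ≤ T a := by
  set σ : Equiv.Perm (Fin m) := Tuple.sort (fun i => -|w i|) with hσdef
  have hanti : Antitone fun k => |w (σ k)| := by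
    intro k l hkl
    have := Tuple.monotone_sort (fun i => -|w i|) hkl
    simpa using this
  calc ∑ i, a i * w i ≤ ∑ i, |a i| * |w i| := by
        refine Finset.sum_le_sum fun i _ => ?_
        rw [← abs_mul]
        exact le_abs_self _
    _ = ∑ k : Fin m, |a (σ k)| * |w (σ k)| :=
        (Equiv.sum_comp σ (fun i => |a i| * |w i|)).symm
    _ ≤ ∑ k : Fin m, |a (σ k)| / Real.sqrt ((k : ℕ) + 1) := by
        refine Finset.sum_le_sum fun k _ => ?_
        rw [div_eq_mul_one_div]
        exact mul_le_mul_of_nonneg_left (sorted_le hw hanti k) (abs_nonneg _)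
    _ ≤ T a := le_T a σ

/-- Pointwise identity between the two suprema. -/
lemma iSup_eq {m : ℕ} (a : Fin m → ℝ) :
    (⨆ w : weakL2Ball m, ∑ i, a i * (w : Fin m → ℝ) i) = T a := by
  haveI : Nonempty (weakL2Ball m) := ⟨⟨0, zero_mem m⟩⟩
  apply le_antisymm
  · exact ciSup_le fun w => sum_le_T a w.2
  · have hbdd : BddAbove (Set.range fun w : weakL2Ball m =>
        ∑ i, a i * (w : Fin m → ℝ) i) :=
      ⟨T a, by rintro x ⟨w, rfl⟩; exact sum_le_T a w.2⟩
    refine ciSup_le fun σ => ?_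
    obtain ⟨w, hwmem, hweq⟩ := exists_witness a σ
    rw [← hweq]
    exact le_ciSup hbdd (⟨w, hwmem⟩ : weakL2Ball m)




/-- the weight sum -/
noncomputable def K (m : ℕ) : ℝ := ∑ i : Fin m, ((i : ℝ) + 1) ^ (-(2/3) : ℝ)

lemma K_nonneg (m : ℕ) : 0 ≤ K m :=
  Finset.sum_nonneg fun i _ => Real.rpow_nonneg (by positivity) _

lemma sqrt_pow_eq {k : ℕ} : (1 / Real.sqrt ((k:ℝ) + 1)) ^ ((4:ℝ)/3) = ((k:ℝ) + 1) ^ (-(2/3) : ℝ) := by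
  have h0 : (0:ℝ) ≤ (k:ℝ) + 1 := by positivity
  rw [Real.sqrt_eq_rpow, one_div, ← Real.rpow_neg h0, ← Real.rpow_mul h0]
  norm_num

lemma holder_T {m : ℕ} (a : Fin m → ℝ) :
    T a ≤ (∑ i, (a i) ^ 4) ^ ((1:ℝ)/4) * K m ^ ((3:ℝ)/4) := by
  refine ciSup_le fun σ => ?_
  have hconj : Real.HolderConjugate 4 (4/3) := Real.holderConjugate_iff.mpr ⟨by norm_num, by norm_num⟩
  have h := Real.inner_le_Lp_mul_Lq_of_nonneg (Finset.univ)
    (f := fun i : Fin m => |a (σ i)|)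
    (g := fun i : Fin m => 1 / Real.sqrt ((i : ℕ) + 1)) hconj
    (fun i _ => abs_nonneg _) (fun i _ => by positivity)
  have e1 : ∀ i : Fin m, |a (σ i)| ^ (4:ℝ) = (a (σ i)) ^ 4 := by
    intro i
    rw [show (4:ℝ) = ((4:ℕ):ℝ) by norm_num, Real.rpow_natCast]
    rw [pow_abs, abs_of_nonneg (by positivity)]
  have e2 : ∑ i : Fin m, (a (σ i)) ^ 4 = ∑ i, (a i) ^ 4 :=
    Equiv.sum_comp σ (fun i => (a i) ^ 4)
  calc ∑ i : Fin m, |a (σ i)| / Real.sqrt ((i : ℕ) + 1)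
      = ∑ i : Fin m, |a (σ i)| * (1 / Real.sqrt ((i : ℕ) + 1)) :=
        Finset.sum_congr rfl fun i _ => div_eq_mul_one_div _ _
    _ ≤ (∑ i : Fin m, |a (σ i)| ^ (4:ℝ)) ^ (1/(4:ℝ)) *
        (∑ i : Fin m, (1 / Real.sqrt ((i : ℕ) + 1)) ^ ((4:ℝ)/3)) ^ (1/((4:ℝ)/3)) := h
    _ = (∑ i, (a i) ^ 4) ^ ((1:ℝ)/4) * K m ^ ((3:ℝ)/4) := by
        congr 1
        · rw [show ∑ i : Fin m, |a (σ i)| ^ (4:ℝ) = ∑ i : Fin m, (a (σ i)) ^ 4 from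
            Finset.sum_congr rfl fun i _ => e1 i, e2]
        · rw [show ∑ i : Fin m, (1 / Real.sqrt ((i : ℕ) + 1)) ^ ((4:ℝ)/3) = K m from
            Finset.sum_congr rfl fun i _ => sqrt_pow_eq]
          norm_num

/-- `∑_{i<m} (i+1)^{-2/3} ≤ 3 m^{1/3}` -/
lemma K_range_le (m : ℕ) :
    ∑ i ∈ Finset.range m, ((i : ℝ) + 1) ^ (-(2/3) : ℝ) ≤ 3 * (m:ℝ) ^ ((1:ℝ)/3) := by
  induction m with
  | zero => simp
  | succ n ih =>
    rw [Finset.sum_range_succ]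
    have hx : (0:ℝ) ≤ (n:ℝ) ^ ((1:ℝ)/3) := Real.rpow_nonneg (by positivity) _
    set x : ℝ := (n:ℝ) ^ ((1:ℝ)/3) with hxdef
    set y : ℝ := ((n:ℝ)+1) ^ ((1:ℝ)/3) with hydef
    have hy : (0:ℝ) < y := Real.rpow_pos_of_pos (by positivity) _
    have hx3 : x ^ 3 = (n:ℝ) := by
      rw [hxdef, ← Real.rpow_natCast ((n:ℝ) ^ ((1:ℝ)/3)) 3, ← Real.rpow_mul (by positivity)]
      norm_num
    have hy3 : y ^ 3 = (n:ℝ) + 1 := by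
      rw [hydef, ← Real.rpow_natCast (((n:ℝ)+1) ^ ((1:ℝ)/3)) 3, ← Real.rpow_mul (by positivity)]
      norm_num
    have hxy : x ≤ y := by
      rw [hxdef, hydef]
      exact Real.rpow_le_rpow (by positivity) (by linarith) (by norm_num)
    have hterm : ((n : ℝ) + 1) ^ (-(2/3) : ℝ) = (y ^ 2)⁻¹ := by
      have hyy : y ^ 2 = ((n:ℝ)+1) ^ ((2:ℝ)/3) := by
        rw [hydef, ← Real.rpow_natCast (((n:ℝ)+1) ^ ((1:ℝ)/3)) 2, ← Real.rpow_mul (by positivity)]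
        norm_num
      rw [hyy, ← Real.rpow_neg (by positivity)]
    have hcast : ((n + 1 : ℕ) : ℝ) ^ ((1:ℝ)/3) = y := by
      rw [hydef]; push_cast; ring_nf
    rw [hterm, hcast]
    have h2yx : (0:ℝ) ≤ 2 * y + x := by linarith
    have key : 1 ≤ 3 * (y - x) * y ^ 2 := by
      nlinarith [mul_nonneg (sq_nonneg (y - x)) h2yx, hx3, hy3]
    have h2 : (y ^ 2)⁻¹ ≤ 3 * (y - x) := by
      rw [inv_le_iff_one_le_mul₀ (by positivity)]
      nlinarith [key]
    linarith [ih, h2]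

lemma K_le (m : ℕ) : K m ≤ 3 * (m:ℝ) ^ ((1:ℝ)/3) := by
  have h : K m = ∑ i ∈ Finset.range m, ((i : ℝ) + 1) ^ (-(2/3) : ℝ) := by
    rw [K]
    exact Fin.sum_univ_eq_sum_range (fun i => ((i : ℝ) + 1) ^ (-(2/3) : ℝ)) m
  rw [h]
  exact K_range_le m

/-- AM-GM: `x^{1/4} ≤ 3a/4 + x/(4a³)` for `x ≥ 0`, `a > 0`. -/
lemma rpow_quarter_le {x a : ℝ} (hx : 0 ≤ x) (ha : 0 < a) :
    x ^ ((1:ℝ)/4) ≤ 3/4 * a + x / (4 * a ^ 3) := by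
  set t : ℝ := x ^ ((1:ℝ)/4) with htdef
  have ht : 0 ≤ t := Real.rpow_nonneg hx _
  have ht4 : t ^ 4 = x := by
    rw [htdef, ← Real.rpow_natCast (x ^ ((1:ℝ)/4)) 4, ← Real.rpow_mul hx]
    norm_num
  rw [← ht4, ← sub_le_iff_le_add', le_div_iff₀ (by positivity : (0:ℝ) < 4 * a ^ 3)]
  nlinarith [sq_nonneg (t - a), sq_nonneg (t + a), mul_nonneg (sq_nonneg (t - a)) (sq_nonneg (t + a)), mul_nonneg (sq_nonneg (t - a)) (sq_nonneg a)]



lemma integrable_pow4_mul_exp : Integrable (fun x : ℝ => x ^ 4 * Real.exp (-(1/2) * x ^ 2)) := by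
  have h := integrable_rpow_mul_exp_neg_mul_sq (by norm_num : (0:ℝ) < 1/2) (s := 4) (by norm_num)
  have e : (fun x : ℝ => x ^ (4:ℝ) * Real.exp (-(1/2) * x ^ 2))
      = fun x : ℝ => x ^ 4 * Real.exp (-(1/2) * x ^ 2) := by
    funext x
    rw [show (4:ℝ) = ((4:ℕ):ℝ) by norm_num, Real.rpow_natCast]
  rwa [e] at h

lemma integral_pow4_mul_exp :
    ∫ x : ℝ, x ^ 4 * Real.exp (-(1/2) * x ^ 2) = 3 * Real.sqrt 2 * Real.sqrt Real.pi := by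
  have heven : ∫ x in Set.Iic (0:ℝ), x ^ 4 * Real.exp (-(1/2) * x ^ 2)
      = ∫ x in Set.Ioi (0:ℝ), x ^ 4 * Real.exp (-(1/2) * x ^ 2) := by
    have := integral_comp_neg_Iic (0:ℝ) (fun x => x ^ 4 * Real.exp (-(1/2) * x ^ 2))
    simp only [neg_zero] at this
    rw [← this]
    refine setIntegral_congr_fun measurableSet_Iic fun x _ => ?_
    ring_nf
  have hsplit : (∫ x in Set.Ioi (0:ℝ), x ^ 4 * Real.exp (-(1/2) * x ^ 2))
      + (∫ x in Set.Iic (0:ℝ), x ^ 4 * Real.exp (-(1/2) * x ^ 2))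
      = ∫ x : ℝ, x ^ 4 * Real.exp (-(1/2) * x ^ 2) := by
    rw [← Set.compl_Ioi]
    exact integral_add_compl measurableSet_Ioi integrable_pow4_mul_exp
  have hIoi : ∫ x in Set.Ioi (0:ℝ), x ^ 4 * Real.exp (-(1/2) * x ^ 2)
      = ((1:ℝ)/2) ^ (-((4:ℝ)+1)/2) * (1/2) * Real.Gamma (((4:ℝ)+1)/2) := by
    rw [← integral_rpow_mul_exp_neg_mul_rpow (by norm_num : (0:ℝ) < 2) (by norm_num : (-1:ℝ) < 4)
      (by norm_num : (0:ℝ) < 1/2)]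
    refine setIntegral_congr_fun measurableSet_Ioi fun x _ => ?_
    rw [show (4:ℝ) = ((4:ℕ):ℝ) by norm_num, show (2:ℝ) = ((2:ℕ):ℝ) by norm_num,
      Real.rpow_natCast, Real.rpow_natCast]
  have hGamma : Real.Gamma (((4:ℝ)+1)/2) = 3/4 * Real.sqrt Real.pi := by
    have h1 : ((4:ℝ)+1)/2 = 3/2 + 1 := by norm_num
    have h2 : (3:ℝ)/2 = 1/2 + 1 := by norm_num
    rw [h1, Real.Gamma_add_one (by norm_num), h2, Real.Gamma_add_one (by norm_num),
      Real.Gamma_one_half_eq]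
    ring
  have hpow : ((1:ℝ)/2) ^ (-((4:ℝ)+1)/2) = 4 * Real.sqrt 2 := by
    have h1 : ((1:ℝ)/2) = 2⁻¹ := by norm_num
    rw [h1, ← Real.rpow_neg_one (2:ℝ), ← Real.rpow_mul (by norm_num : (0:ℝ) ≤ 2),
      show (-1:ℝ) * (-((4:ℝ)+1)/2) = ((2:ℕ):ℝ) + 1/2 by norm_num,
      Real.rpow_add (by norm_num : (0:ℝ) < 2), Real.rpow_natCast, ← Real.sqrt_eq_rpow]
    norm_num
  rw [← hsplit, heven, hIoi, hGamma, hpow]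
  ring



lemma gaussianReal_eq : gaussianReal 0 1
    = volume.withDensity fun x => ((gaussianPDFReal 0 1 x).toNNReal : ENNReal) := by
  rw [gaussianReal_of_var_ne_zero 0 one_ne_zero]
  congr 1

lemma pdf_eq (x : ℝ) :
    gaussianPDFReal 0 1 x = (Real.sqrt (2 * Real.pi))⁻¹ * Real.exp (-(1/2) * x ^ 2) := by
  simp only [gaussianPDFReal, NNReal.coe_one, mul_one, sub_zero]
  congr 1
  rw [show -x ^ 2 / 2 = -(1/2) * x ^ 2 by ring]

lemma meas_toNN : Measurable fun x => (gaussianPDFReal 0 1 x).toNNReal :=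
  (measurable_gaussianPDFReal 0 1).real_toNNReal

lemma integrable_pow4_gaussian : Integrable (fun x : ℝ => x ^ 4) (gaussianReal 0 1) := by
  rw [gaussianReal_eq]
  rw [integrable_withDensity_iff_integrable_smul meas_toNN]
  have e : (fun x : ℝ => ((gaussianPDFReal 0 1 x).toNNReal : ℝ≥0) • x ^ 4)
      = fun x : ℝ => (Real.sqrt (2 * Real.pi))⁻¹ * (x ^ 4 * Real.exp (-(1/2) * x ^ 2)) := by
    funext x
    rw [NNReal.smul_def, smul_eq_mul, Real.coe_toNNReal _ (gaussianPDFReal_nonneg 0 1 x), pdf_eq]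
    ring
  rw [e]
  exact integrable_pow4_mul_exp.const_mul _

lemma integral_pow4_gaussian : ∫ x : ℝ, x ^ 4 ∂(gaussianReal 0 1) = 3 := by
  rw [gaussianReal_eq, integral_withDensity_eq_integral_smul meas_toNN]
  have e : (fun x : ℝ => ((gaussianPDFReal 0 1 x).toNNReal : ℝ≥0) • x ^ 4)
      = fun x : ℝ => (Real.sqrt (2 * Real.pi))⁻¹ * (x ^ 4 * Real.exp (-(1/2) * x ^ 2)) := by
    funext x
    rw [NNReal.smul_def, smul_eq_mul, Real.coe_toNNReal _ (gaussianPDFReal_nonneg 0 1 x), pdf_eq]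
    ring
  rw [show (∫ x : ℝ, ((gaussianPDFReal 0 1 x).toNNReal : ℝ≥0) • x ^ 4)
      = ∫ x : ℝ, (Real.sqrt (2 * Real.pi))⁻¹ * (x ^ 4 * Real.exp (-(1/2) * x ^ 2)) by rw [e]]
  rw [integral_const_mul, integral_pow4_mul_exp]
  rw [Real.sqrt_mul (by norm_num : (0:ℝ) ≤ 2)]
  have h2 : (0:ℝ) < Real.sqrt 2 := Real.sqrt_pos.2 (by norm_num)
  have hpi : (0:ℝ) < Real.sqrt Real.pi := Real.sqrt_pos.2 Real.pi_pos
  field_simp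


end Stmt15Aux

open Stmt15Aux

/-- For i.i.d. standard Gaussians, `E sup_{w ∈ W_m} ∑ gᵢ wᵢ = E ∑ gᵢ*/√i ≤ C √m`, where
`∑ gᵢ*/√i` is expressed as the maximum over permutations of `∑ |g_{σ(i)}|/√(i+1)`. -/
theorem stmt15 : ∃ C > 0, ∀ (Ω : Type) (_ : MeasurableSpace Ω) (μ : Measure Ω),
    IsProbabilityMeasure μ → ∀ m : ℕ, 1 ≤ m → ∀ g : Fin m → Ω → ℝ,
    (∀ i, Measurable (g i)) →
    iIndepFun g μ →
    (∀ i, μ.map (g i) = gaussianReal 0 1) →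
    (∫ ω, (⨆ w : weakL2Ball m, ∑ i, g i ω * (w : Fin m → ℝ) i) ∂μ) =
      (∫ ω, (⨆ σ : Equiv.Perm (Fin m),
        ∑ i : Fin m, |g (σ i) ω| / Real.sqrt ((i : ℕ) + 1)) ∂μ) ∧
    (∫ ω, (⨆ w : weakL2Ball m, ∑ i, g i ω * (w : Fin m → ℝ) i) ∂μ) ≤
      C * Real.sqrt m := by
  refine ⟨3, by norm_num, ?_⟩
  intro Ω mΩ μ hprob m hm g hmeas hindep hlaw
  have hsm : AEStronglyMeasurable (fun x : ℝ => x ^ 4) ((gaussianReal 0 1 : Measure ℝ)) :=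
    (measurable_id.pow_const 4).aestronglyMeasurable
  have hInt4 : ∀ i, Integrable (fun ω => (g i ω) ^ 4) μ := by
    intro i
    have h := (integrable_map_measure (f := g i) (g := fun x : ℝ => x ^ 4)
      (by rw [hlaw i]; exact hsm) (hmeas i).aemeasurable).mp
      (by rw [hlaw i]; exact integrable_pow4_gaussian)
    exact h
  have hVal4 : ∀ i, ∫ ω, (g i ω) ^ 4 ∂μ = 3 := by
    intro i
    have h := integral_map (φ := g i) (f := fun x : ℝ => x ^ 4)
      (hmeas i).aemeasurable (by rw [hlaw i]; exact hsm)
    rw [hlaw i, integral_pow4_gaussian] at h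
    exact h.symm
  have hpt : (fun ω => ⨆ w : weakL2Ball m, ∑ i, g i ω * (w : Fin m → ℝ) i)
      = fun ω => ⨆ σ : Equiv.Perm (Fin m),
          ∑ i : Fin m, |g (σ i) ω| / Real.sqrt ((i : ℕ) + 1) := by
    funext ω
    exact iSup_eq (fun i => g i ω)
  refine ⟨by rw [hpt], ?_⟩
  -- the bound
  have hm1 : (1:ℝ) ≤ (m:ℝ) := by exact_mod_cast hm
  have hmpos : (0:ℝ) < (m:ℝ) := by linarith
  set av : ℝ := ((3:ℝ) * m) ^ ((1:ℝ)/4) with havdef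
  set c : ℝ := (3:ℝ) ^ ((3:ℝ)/4) * (m:ℝ) ^ ((1:ℝ)/4) with hcdef
  have ha : 0 < av := Real.rpow_pos_of_pos (by positivity) _
  have hc : 0 ≤ c := by positivity
  have ha4 : av ^ 4 = 3 * m := by
    rw [havdef, ← Real.rpow_natCast (((3:ℝ)*m) ^ ((1:ℝ)/4)) 4,
      ← Real.rpow_mul (by positivity)]
    norm_num
  have hB : K m ^ ((3:ℝ)/4) ≤ c := by
    calc K m ^ ((3:ℝ)/4) ≤ (3 * (m:ℝ) ^ ((1:ℝ)/3)) ^ ((3:ℝ)/4) :=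
          Real.rpow_le_rpow (K_nonneg m) (K_le m) (by norm_num)
      _ = c := by
          rw [Real.mul_rpow (by norm_num) (Real.rpow_nonneg hmpos.le _),
            ← Real.rpow_mul hmpos.le, hcdef]
          norm_num
  have hpoint : ∀ ω, (⨆ w : weakL2Ball m, ∑ i, g i ω * (w : Fin m → ℝ) i)
      ≤ c * (3/4 * av + (∑ i, (g i ω) ^ 4) / (4 * av ^ 3)) := by
    intro ω
    rw [iSup_eq (fun i => g i ω)]
    have hS : (0:ℝ) ≤ ∑ i, (g i ω) ^ 4 := Finset.sum_nonneg fun i _ => by positivity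
    calc T (fun i => g i ω) ≤ (∑ i, (g i ω) ^ 4) ^ ((1:ℝ)/4) * K m ^ ((3:ℝ)/4) :=
          holder_T _
      _ ≤ (3/4 * av + (∑ i, (g i ω) ^ 4) / (4 * av ^ 3)) * c := by
          refine mul_le_mul (rpow_quarter_le hS ha) hB
            (Real.rpow_nonneg (K_nonneg m) _) (by positivity)
      _ = c * (3/4 * av + (∑ i, (g i ω) ^ 4) / (4 * av ^ 3)) := by ring
  have hSint : Integrable (fun ω => ∑ i, (g i ω) ^ 4) μ :=
    integrable_finset_sum _ (fun i _ => hInt4 i)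
  have hVint : Integrable
      (fun ω => c * (3/4 * av + (∑ i, (g i ω) ^ 4) / (4 * av ^ 3))) μ :=
    (((integrable_const _).add (hSint.div_const _)).const_mul _)
  have hmono := integral_mono_of_nonneg
    (ae_of_all μ (fun ω => by rw [iSup_eq (fun i => g i ω)]; exact T_nonneg _))
    hVint (ae_of_all μ hpoint)
  refine le_trans hmono ?_
  have hVval : ∫ ω, c * (3/4 * av + (∑ i, (g i ω) ^ 4) / (4 * av ^ 3)) ∂μ
      = c * (3/4 * av + (m * 3) / (4 * av ^ 3)) := by
    rw [integral_const_mul]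
    congr 1
    rw [integral_add (integrable_const _) (hSint.div_const _)]
    rw [integral_const]
    simp only [measure_univ, probReal_univ, ENNReal.toReal_one, smul_eq_mul, one_mul]
    congr 1
    rw [integral_div, integral_finset_sum _ (fun i _ => hInt4 i)]
    rw [Finset.sum_congr rfl (fun i _ => hVal4 i)]
    simp [Finset.sum_const, Finset.card_univ]
  rw [hVval]
  have hdiv : ((m:ℝ) * 3) / (4 * av ^ 3) = av / 4 := by
    have : (m:ℝ) * 3 = av ^ 3 * av := by rw [← pow_succ]; rw [ha4]; ring
    rw [this]
    field_simp
  rw [hdiv]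
  have hfin : c * (3/4 * av + av/4) = 3 * Real.sqrt m := by
    have h1 : c * (3/4 * av + av/4) = c * av := by ring
    rw [h1, hcdef, havdef]
    rw [Real.mul_rpow (by norm_num) hmpos.le]
    rw [show (3:ℝ) ^ ((3:ℝ)/4) * ((m:ℝ) ^ ((1:ℝ)/4)) * ((3:ℝ) ^ ((1:ℝ)/4) * (m:ℝ) ^ ((1:ℝ)/4))
        = ((3:ℝ) ^ ((3:ℝ)/4) * (3:ℝ) ^ ((1:ℝ)/4)) * ((m:ℝ) ^ ((1:ℝ)/4) * (m:ℝ) ^ ((1:ℝ)/4)) by ring]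
    rw [← Real.rpow_add (by norm_num : (0:ℝ) < 3), ← Real.rpow_add hmpos]
    rw [show (3:ℝ)/4 + 1/4 = 1 by norm_num, show (1:ℝ)/4 + 1/4 = 1/2 by norm_num,
      Real.rpow_one, ← Real.sqrt_eq_rpow]
  rw [hfin]
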